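/- Let a ∈ (0,1). For v ∈ (√a, 1), the expression (v(v²-a)+2v)/√((v²-a)²+4v²) - v equals 2v/√((v²-a)²+4v²) - 4v³/((v²-a)² + 4v² + (v²-a)√((v²-a)²+4v²)), and this is at most 1 - (4/(5+√5))·v. -/

import Mathlib

private lemma aux_core (v w : ℝ) (hv0 : 0 < v) (hv2 : v < 1)
    (hw : w ^ 2 = 5 * v ^ 2) (hw0 : 0 < w) (hw2v : 2 * v < w) :
    v ^ 2 ≤ (2 * (w / 5) + (w / 5) ^ 2) * ((1 + w / 5) ^ 2 - v ^ 2) := by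
  have hv2sq : v ^ 2 < 1 := by nlinarith
  have h1 : 0 ≤ w * (1 - v ^ 2) := mul_nonneg hw0.le (by linarith)
  have h2 : 0 ≤ w - v ^ 4 := by nlinarith
  have hcore : 0 ≤ 10 * w - 6 * w * v ^ 2 - 4 * v ^ 4 := by nlinarith [h1, h2]
  have hP : (2 * (w / 5) + (w / 5) ^ 2) * ((1 + w / 5) ^ 2 - v ^ 2) - v ^ 2
      = (10 * w - 6 * w * v ^ 2 - 4 * v ^ 4) / 25 := by
    linear_combination (1 / 5 + 4 * w / 125 + (w ^ 2 + 5 * v ^ 2) / 625 - v ^ 2 / 25) * hw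
  linarith

private lemma aux_key (b v w : ℝ) (hb : 0 < b) (hv0 : 0 < v) (hv2 : v < 1)
    (hw : w ^ 2 = 5 * v ^ 2) (hw0 : 0 < w) (hw2v : 2 * v < w) :
    (v * b + 2 * v) ^ 2 ≤ (b ^ 2 + 4 * v ^ 2) * (1 + w / 5) ^ 2 := by
  have haux := aux_core v w hv0 hv2 hw hw0 hw2v
  have hv2sq : v ^ 2 < 1 := by nlinarith
  have hA : 0 < (1 + w / 5) ^ 2 - v ^ 2 := by nlinarith [hw, hw0]
  nlinarith [sq_nonneg (((1 + w / 5) ^ 2 - v ^ 2) * b - 2 * v ^ 2),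
    mul_nonneg (sq_nonneg v) (sub_nonneg.mpr haux), hA]

private lemma aux_eq (b v S : ℝ) (hb : 0 < b) (hv0 : 0 < v) (hS : 0 < S)
    (hSsq : S ^ 2 = b ^ 2 + 4 * v ^ 2) :
    (v * b + 2 * v) / S - v = 2 * v / S - 4 * v ^ 3 / (b ^ 2 + 4 * v ^ 2 + b * S) := by
  have hden : 0 < b ^ 2 + 4 * v ^ 2 + b * S := by positivity
  field_simp
  ring_nf
  linear_combination (-b) * hSsq

private lemma aux_ineq (b v S s : ℝ) (hb : 0 < b) (hv0 : 0 < v) (hv2 : v < 1)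
    (hS : 0 < S) (hSsq : S ^ 2 = b ^ 2 + 4 * v ^ 2)
    (hs5 : s ^ 2 = 5) (hs2 : 2 < s) :
    (v * b + 2 * v) / S - v ≤ 1 - 4 / (5 + s) * v := by
  have hw : (s * v) ^ 2 = 5 * v ^ 2 := by rw [mul_pow, hs5]
  have hw0 : 0 < s * v := by positivity
  have hw2v : 2 * v < s * v := by nlinarith
  have hkey := aux_key b v (s * v) hb hv0 hv2 hw hw0 hw2v
  have hR : 0 < 1 + s * v / 5 := by positivity
  have h45 : 4 / (5 + s) = (5 - s) / 5 := by
    rw [div_eq_div_iff (by positivity) (by norm_num)]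
    linear_combination hs5
  have h2 : v * b + 2 * v ≤ S * (1 + s * v / 5) := by
    nlinarith [hkey, hSsq, mul_pos hS hR, mul_pos hv0 hb]
  have h3 : (v * b + 2 * v) / S ≤ 1 + s * v / 5 := by
    rw [div_le_iff₀ hS]; nlinarith [mul_pos hS hR]
  rw [h45]
  nlinarith [h3]

theorem stmt_14 (a : ℝ) (ha : a ∈ Set.Ioo (0 : ℝ) 1)
    (v : ℝ) (hv : v ∈ Set.Ioo (Real.sqrt a) 1) :
    (v * (v ^ 2 - a) + 2 * v) / Real.sqrt ((v ^ 2 - a) ^ 2 + 4 * v ^ 2) - v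
      = 2 * v / Real.sqrt ((v ^ 2 - a) ^ 2 + 4 * v ^ 2)
        - 4 * v ^ 3 / ((v ^ 2 - a) ^ 2 + 4 * v ^ 2
            + (v ^ 2 - a) * Real.sqrt ((v ^ 2 - a) ^ 2 + 4 * v ^ 2)) ∧
    (v * (v ^ 2 - a) + 2 * v) / Real.sqrt ((v ^ 2 - a) ^ 2 + 4 * v ^ 2) - v
      ≤ 1 - 4 / (5 + Real.sqrt 5) * v := by
  obtain ⟨ha0, ha1⟩ := ha
  obtain ⟨hv1, hv2⟩ := hv
  have hsa : 0 < Real.sqrt a := Real.sqrt_pos.mpr ha0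
  have hv0 : 0 < v := lt_trans hsa hv1
  have hsaq : Real.sqrt a ^ 2 = a := Real.sq_sqrt ha0.le
  have hb : 0 < v ^ 2 - a := by nlinarith [Real.sqrt_nonneg a]
  have hS2pos : 0 < (v ^ 2 - a) ^ 2 + 4 * v ^ 2 := by positivity
  have hS : 0 < Real.sqrt ((v ^ 2 - a) ^ 2 + 4 * v ^ 2) := Real.sqrt_pos.mpr hS2pos
  have hSsq : Real.sqrt ((v ^ 2 - a) ^ 2 + 4 * v ^ 2) ^ 2 = (v ^ 2 - a) ^ 2 + 4 * v ^ 2 :=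
    Real.sq_sqrt hS2pos.le
  have hs5 : Real.sqrt 5 ^ 2 = 5 := Real.sq_sqrt (by norm_num)
  have hs2 : 2 < Real.sqrt 5 := by nlinarith [Real.sqrt_nonneg 5]
  exact ⟨aux_eq _ v _ hb hv0 hS hSsq, aux_ineq _ v _ _ hb hv0 hv2 hS hSsq hs5 hs2⟩
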